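/- arXiv:1704.06810 — 7 statements merged into one kernel-verified Lean document; each statement's English description precedes it below -/
import Mathlib

section
/- Let A be an associative algebra over a field F, and let u_1, ..., u_m be elements of A such that for all i, j there exist nonzero scalars r_{i,j} ∈ F with u_i u_j = r_{i,j} u_j u_i, and r_{i,j} = 1 whenever u_i = u_j. Define the iterated commutator [u_1, ..., u_m]⁻ := [u_1, [u_2, ..., [u_{m-1}, u_m]⁻ ...]⁻]⁻ where [a,b]⁻ = ab - ba. Then [u_1, ..., u_m]⁻ = (r_{1,(2...m)} - 1)(r_{2,(3...m)} - 1) ⋯ (r_{m-1,m} - 1) · u_m u_{m-1} ⋯ u_1, where r_{i,(j...m)} := r_{i,j} r_{i,j+1} ⋯ r_{i,m}. -/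
/-- Iterated left-normed commutator `[u₁,[u₂,...,[u_{m-1},u_m]⁻...]⁻]⁻` with `[a,b]⁻ = ab - ba`. -/
def iterBracketSub {A : Type*} [Ring A] : List A → A
  | [] => 0
  | [a] => a
  | a :: b :: l => a * iterBracketSub (b :: l) - iterBracketSub (b :: l) * a

lemma iterBracketSub_cons {A : Type*} [Ring A] (a b : A) (l : List A) :
    iterBracketSub (a :: b :: l)
      = a * iterBracketSub (b :: l) - iterBracketSub (b :: l) * a := rfl

lemma swap_bracket {F A : Type*} [Field F] [Ring A] [Algebra F A] (a : A) :
    ∀ (l : List (A × F)), (∀ p ∈ l, a * p.1 = p.2 • (p.1 * a)) →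
      a * iterBracketSub (l.map Prod.fst) =
        (l.map Prod.snd).prod • (iterBracketSub (l.map Prod.fst) * a)
  | [], _ => by simp [iterBracketSub]
  | [p], h => by simpa [iterBracketSub] using h p (by simp)
  | p :: q :: t, h => by
      have hp := h p List.mem_cons_self
      have ih := swap_bracket a (q :: t) (fun x hx => h x (List.mem_cons_of_mem _ hx))
      simp only [List.map_cons, List.prod_cons] at *
      rw [iterBracketSub_cons]
      set T := iterBracketSub (q.1 :: List.map Prod.fst t) with hT
      set c := q.2 * (List.map Prod.snd t).prod with hc
      have h1 : a * (p.1 * T) = (p.2 * c) • (p.1 * T * a) := by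
        rw [← mul_assoc, hp, smul_mul_assoc, mul_assoc, ih, mul_smul_comm, ← mul_smul,
          ← mul_assoc]
        simp [mul_assoc]
      have h2 : a * (T * p.1) = (p.2 * c) • (T * p.1 * a) := by
        rw [← mul_assoc, ih, smul_mul_assoc, mul_assoc, hp, mul_smul_comm, ← mul_smul,
          mul_comm c p.2, ← mul_assoc]
        simp [mul_assoc]
      rw [mul_sub, h1, h2, sub_mul, smul_sub]

theorem stmt0 {F A : Type*} [Field F] [Ring A] [Algebra F A] (m : ℕ)
    (u : Fin (m + 1) → A) (r : Fin (m + 1) → Fin (m + 1) → F)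
    (hr : ∀ i j, r i j ≠ 0)
    (hq : ∀ i j, u i * u j = r i j • (u j * u i))
    (h1 : ∀ i j, u i = u j → r i j = 1) :
    iterBracketSub (List.ofFn u) =
      (∏ i ∈ Finset.univ.filter (fun i : Fin (m + 1) => (i : ℕ) < m),
        ((∏ j ∈ Finset.univ.filter (fun j => i < j), r i j) - 1)) •
        (List.ofFn u).reverse.prod := by
  induction m with
  | zero =>
      simp [List.ofFn_succ, iterBracketSub]
  | succ m ih =>
      have hT := ih (fun i => u i.succ) (fun i j => r i.succ j.succ)
        (fun i j => hr _ _) (fun i j => hq _ _) (fun i j h => h1 _ _ h)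
      set u' : Fin (m+1) → A := fun i => u i.succ with hu'
      set P := (List.ofFn u').reverse.prod with hP
      set S' := ∏ i ∈ Finset.univ.filter (fun i : Fin (m+1) => (i:ℕ) < m),
        ((∏ j ∈ Finset.univ.filter (fun j => i < j), r i.succ j.succ) - 1) with hS'
      set c := ∏ k : Fin (m+1), r 0 k.succ with hc
      have hsw : u 0 * iterBracketSub (List.ofFn u')
          = c • (iterBracketSub (List.ofFn u') * u 0) := by
        have := swap_bracket (u 0) (List.ofFn (fun k : Fin (m+1) => (u k.succ, r 0 k.succ)))
          (by
            intro p hp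
            simp only [List.mem_ofFn, Set.mem_range] at hp
            obtain ⟨k, rfl⟩ := hp
            exact hq 0 k.succ)
        have hmap : (List.ofFn (fun k : Fin (m+1) => (u k.succ, r 0 k.succ))).map Prod.fst
            = List.ofFn u' := by
          simp only [List.map_ofFn, Function.comp_def, hu']
        have hmap2 : ((List.ofFn (fun k : Fin (m+1) => (u k.succ, r 0 k.succ))).map
            Prod.snd).prod = c := by
          simp only [List.map_ofFn, Function.comp_def, List.prod_ofFn, hc]
        rw [hmap, hmap2] at this
        exact this
      have hL : iterBracketSub (List.ofFn u) =
          u 0 * iterBracketSub (List.ofFn u') - iterBracketSub (List.ofFn u') * u 0 := by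
        rw [show List.ofFn u = u 0 :: List.ofFn u' from List.ofFn_succ (f := u)]
        rw [show List.ofFn u' = u' 0 :: List.ofFn (fun i => u' i.succ) from List.ofFn_succ (f := u')]
        exact iterBracketSub_cons _ _ _
      have hPr : (List.ofFn u).reverse.prod = P * u 0 := by
        rw [show List.ofFn u = u 0 :: List.ofFn u' from List.ofFn_succ (f := u)]
        simp [hP, mul_assoc]
      have key : ∀ i : Fin (m+1),
          (∏ j ∈ Finset.univ.filter (fun j => i.succ < j), r i.succ j)
            = ∏ j ∈ Finset.univ.filter (fun j : Fin (m+1) => i < j), r i.succ j.succ := by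
        intro i
        rw [Finset.prod_filter, Finset.prod_filter, Fin.prod_univ_succ]
        simp [Fin.succ_lt_succ_iff]
      have h0 : (∏ j ∈ Finset.univ.filter (fun j => (0:Fin (m+2)) < j), r 0 j) = c := by
        rw [Finset.prod_filter, Fin.prod_univ_succ]
        simp [Fin.succ_pos, hc]
      have hscal : (∏ i ∈ Finset.univ.filter (fun i : Fin (m + 2) => (i : ℕ) < m + 1),
          ((∏ j ∈ Finset.univ.filter (fun j => i < j), r i j) - 1)) = (c - 1) * S' := by
        rw [Finset.prod_filter, Fin.prod_univ_succ]
        have e0 : (if ((0:Fin (m+2)):ℕ) < m + 1 then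
            (∏ j ∈ Finset.univ.filter (fun j => (0:Fin (m+2)) < j), r 0 j) - 1 else 1)
            = c - 1 := by
          rw [if_pos (by simp), h0]
        rw [e0]
        congr 1
        rw [hS', Finset.prod_filter]
        refine Finset.prod_congr rfl fun x _ => ?_
        rw [key]
        simp [Fin.val_succ, Nat.succ_lt_succ_iff]
      rw [hL, hsw, hT, hPr, hscal]
      rw [smul_mul_assoc, smul_smul, ← sub_smul, sub_mul, one_mul]
end

section
/- Let Γ be a finite graph and u = h_1 h_2 ⋯ h_m a word over its vertex set. Then there exist subwords u_1, u_2, ..., u_r of u, obtained from u by a permutation that only transposes letters which are non-adjacent in Γ, such that u is the concatenation u_1 u_2 ⋯ u_r and the supports μ(u_1), ..., μ(u_r) are exactly the connected components of the subgraph of Γ induced by μ(u). -/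
/-- One step of reordering a word: swap two adjacent letters which are
non-adjacent vertices of the graph `G`. -/
def SwapStep {V : Type*} (G : SimpleGraph V) (l₁ l₂ : List V) : Prop :=
  ∃ (s t : List V) (a b : V), ¬ G.Adj a b ∧
    l₁ = s ++ a :: b :: t ∧ l₂ = s ++ b :: a :: t

open Relation

section helpers
variable {V : Type*} {G : SimpleGraph V}

lemma SwapStep.append_left (s : List V) {u v : List V} (h : SwapStep G u v) :
    SwapStep G (s ++ u) (s ++ v) := by
  obtain ⟨s', t, a, b, hab, h1, h2⟩ := h
  exact ⟨s ++ s', t, a, b, hab, by simp [h1], by simp [h2]⟩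

lemma SwapStep.append_right (t : List V) {u v : List V} (h : SwapStep G u v) :
    SwapStep G (u ++ t) (v ++ t) := by
  obtain ⟨s', t', a, b, hab, h1, h2⟩ := h
  exact ⟨s', t' ++ t, a, b, hab, by simp [h1], by simp [h2]⟩

lemma rtg_append_left (s : List V) {u v : List V}
    (h : ReflTransGen (SwapStep G) u v) :
    ReflTransGen (SwapStep G) (s ++ u) (s ++ v) :=
  ReflTransGen.lift (r := SwapStep G) (fun x => s ++ x) (fun _ _ hab => hab.append_left s) _ _ h

lemma rtg_append_right (t : List V) {u v : List V}
    (h : ReflTransGen (SwapStep G) u v) :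
    ReflTransGen (SwapStep G) (u ++ t) (v ++ t) :=
  ReflTransGen.lift (r := SwapStep G) (fun x => x ++ t) (fun _ _ hab => hab.append_right t) _ _ h

lemma comm_single {x : V} {w : List V} (h : ∀ y ∈ w, ¬ G.Adj x y) :
    ReflTransGen (SwapStep G) (x :: w) (w ++ [x]) := by
  induction w with
  | nil => exact .refl
  | cons b w ih =>
      refine ReflTransGen.head ⟨[], w, x, b, h b (by simp), rfl, rfl⟩ ?_
      exact rtg_append_left [b] (ih fun y hy => h y (by simp [hy]))

lemma comm_blocks {v w : List V} (h : ∀ x ∈ v, ∀ y ∈ w, ¬ G.Adj x y) :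
    ReflTransGen (SwapStep G) (v ++ w) (w ++ v) := by
  induction v with
  | nil => simpa using ReflTransGen.refl
  | cons x v ih =>
      have h1 : ReflTransGen (SwapStep G) (x :: (v ++ w)) (x :: (w ++ v)) :=
        rtg_append_left [x] (ih fun y hy => h y (by simp [hy]))
      have h2 : ReflTransGen (SwapStep G) ((x :: w) ++ v) ((w ++ [x]) ++ v) :=
        rtg_append_right v (comm_single (fun y hy => h x (by simp) y hy))
      have := h1.trans h2
      simpa using this

lemma flatten_partition (p : List V → Bool) (l : List (List V))
    (hl : l.Pairwise (fun v w => ∀ x ∈ v, ∀ y ∈ w, ¬ G.Adj x y)) :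
    ReflTransGen (SwapStep G) l.flatten
      ((l.filter p).flatten ++ (l.filter (fun v => !p v)).flatten) := by
  induction l with
  | nil => simpa using ReflTransGen.refl
  | cons v l ih =>
      rcases List.pairwise_cons.1 hl with ⟨hv, hl'⟩
      by_cases hp : p v
      · have := rtg_append_left v (ih hl')
        simpa [List.filter_cons, hp] using this
      · have h1 : ReflTransGen (SwapStep G) (v :: l).flatten
            (v ++ ((l.filter p).flatten ++ (l.filter (fun w => !p w)).flatten)) := by
          simpa using rtg_append_left v (ih hl')
        have hcomm : ∀ x ∈ v, ∀ y ∈ (l.filter p).flatten, ¬ G.Adj x y := by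
          intro x hx y hy
          rcases List.mem_flatten.1 hy with ⟨b, hb, hyb⟩
          exact hv b (List.mem_of_mem_filter hb) x hx y hyb
        have h2 : ReflTransGen (SwapStep G)
            ((v ++ (l.filter p).flatten) ++ (l.filter (fun w => !p w)).flatten)
            (((l.filter p).flatten ++ v) ++ (l.filter (fun w => !p w)).flatten) :=
          rtg_append_right _ (comm_blocks hcomm)
        have := h1.trans (by simpa [List.append_assoc] using h2)
        simpa [List.filter_cons, hp] using this

lemma foldr_toFinset [DecidableEq V] (l : List (List V)) :
    (l.map List.toFinset).foldr (· ∪ ·) ∅ = l.flatten.toFinset := by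
  induction l with
  | nil => simp
  | cons v l ih => simp [ih]

lemma reachable_mono {S T : Set V} (hST : S ⊆ T) {x y : V} (hx : x ∈ S) (hy : y ∈ S)
    (h : (G.induce S).Reachable ⟨x, hx⟩ ⟨y, hy⟩) :
    (G.induce T).Reachable ⟨x, hST hx⟩ ⟨y, hST hy⟩ := by
  let f : G.induce S →g G.induce T := ⟨fun z => ⟨z.1, hST z.2⟩, fun h => h⟩
  exact h.map f

lemma connected_insert [DecidableEq V] (a : V) (ls : List (List V))
    (hconn : ∀ v ∈ ls, (G.induce (↑v.toFinset : Set V)).Connected)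
    (htouch : ∀ v ∈ ls, a ∈ v ∨ ∃ b ∈ v, G.Adj a b) :
    (G.induce (↑(a :: ls.flatten).toFinset : Set V)).Connected := by
  set S : Set V := ↑(a :: ls.flatten).toFinset with hS
  have hmem : ∀ x, x ∈ S ↔ x = a ∨ x ∈ ls.flatten := by
    intro x; simp [hS]
  have ha : a ∈ S := (hmem a).2 (Or.inl rfl)
  have key : ∀ x (hx : x ∈ S), (G.induce S).Reachable ⟨x, hx⟩ ⟨a, ha⟩ := by
    intro x hx
    rcases (hmem x).1 hx with rfl | hxf
    · exact SimpleGraph.Reachable.refl _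
    · rcases List.mem_flatten.1 hxf with ⟨v, hv, hxv⟩
      have hsub : (↑v.toFinset : Set V) ⊆ S := by
        intro y hy
        exact (hmem y).2 (Or.inr (List.mem_flatten.2 ⟨v, hv, by simpa using hy⟩))
      rcases htouch v hv with hav | ⟨b, hb, hadj⟩
      · have := (hconn v hv).preconnected ⟨x, by simpa using hxv⟩ ⟨a, by simpa using hav⟩
        exact reachable_mono hsub _ _ this
      · have h1 := (hconn v hv).preconnected ⟨x, by simpa using hxv⟩ ⟨b, by simpa using hb⟩
        have h2 := reachable_mono hsub _ _ h1
        have hedge : (G.induce S).Adj ⟨b, hsub (by simpa using hb)⟩ ⟨a, ha⟩ := hadj.symm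
        exact h2.trans hedge.reachable
  have : Nonempty ↑S := ⟨⟨a, ha⟩⟩
  exact ⟨fun x y => (key x.1 x.2).trans (key y.1 y.2).symm⟩

end helpers

theorem stmt4 {V : Type*} [Fintype V] [DecidableEq V] (G : SimpleGraph V)
    (u : List V) :
    ∃ l : List (List V),
      Relation.ReflTransGen (SwapStep G) u l.flatten ∧
      (∀ v ∈ l, v ≠ [] ∧ (G.induce (↑v.toFinset : Set V)).Connected) ∧
      l.Pairwise (fun v w => Disjoint v.toFinset w.toFinset ∧
        ∀ a ∈ v.toFinset, ∀ b ∈ w.toFinset, ¬ G.Adj a b) ∧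
      (l.map List.toFinset).foldr (· ∪ ·) ∅ = u.toFinset := by
  classical
  induction u with
  | nil => exact ⟨[], ReflTransGen.refl, by simp, by simp, by simp⟩
  | cons a u ih =>
      obtain ⟨l, hrtg, hblocks, hpair, hunion⟩ := ih
      set p : List V → Bool := fun v => decide (a ∈ v ∨ ∃ b ∈ v, G.Adj a b) with hp
      set lP := l.filter p with hlP
      set lQ := l.filter (fun v => !p v) with hlQ
      have hPmem : ∀ v ∈ lP, a ∈ v ∨ ∃ b ∈ v, G.Adj a b := by
        intro v hv
        have := List.of_mem_filter hv
        simpa [hp] using this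
      have hQmem : ∀ v ∈ lQ, a ∉ v ∧ ∀ b ∈ v, ¬ G.Adj a b := by
        intro v hv
        have := List.of_mem_filter hv
        simp only [hp, Bool.not_eq_true', decide_eq_false_iff_not] at this
        push_neg at this
        exact this
      have hsymm : Symmetric (fun v w : List V => Disjoint v.toFinset w.toFinset ∧
          ∀ a ∈ v.toFinset, ∀ b ∈ w.toFinset, ¬ G.Adj a b) := by
        intro v w ⟨hd, hna⟩
        exact ⟨hd.symm, fun x hx y hy h => hna y hy x hx h.symm⟩
      haveI : Std.Symm (fun v w : List V => Disjoint v.toFinset w.toFinset ∧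
          ∀ a ∈ v.toFinset, ∀ b ∈ w.toFinset, ¬ G.Adj a b) := ⟨fun _ _ h => hsymm h⟩
      have hall := hpair.forall
      refine ⟨(a :: lP.flatten) :: lQ, ?_, ?_, ?_, ?_⟩
      · have h1 : ReflTransGen (SwapStep G) (a :: u) (a :: l.flatten) :=
          rtg_append_left [a] hrtg
        have h2 : ReflTransGen (SwapStep G) l.flatten (lP.flatten ++ lQ.flatten) :=
          flatten_partition p l (hpair.imp fun h x hx y hy =>
            h.2 x (by simpa using hx) y (by simpa using hy))
        have h3 := h1.trans (rtg_append_left [a] h2)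
        simpa using h3
      · rintro v hv
        rcases List.mem_cons.1 hv with rfl | hv'
        · refine ⟨by simp, ?_⟩
          exact connected_insert a lP
            (fun w hw => (hblocks w (List.mem_of_mem_filter hw)).2) hPmem
        · exact hblocks v (List.mem_of_mem_filter hv')
      · refine List.pairwise_cons.2 ⟨?_, ?_⟩
        · intro w hw
          have hQw := hQmem w hw
          have hne : ∀ v ∈ lP, v ≠ w := by
            intro v hv hvw
            rcases hPmem v hv with hav | ⟨b, hb, hadj⟩
            · exact hQw.1 (hvw ▸ hav)
            · exact hQw.2 b (hvw ▸ hb) hadj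
          have hrel : ∀ v ∈ lP, Disjoint v.toFinset w.toFinset ∧
              ∀ x ∈ v.toFinset, ∀ y ∈ w.toFinset, ¬ G.Adj x y := by
            intro v hv
            exact hall (List.mem_of_mem_filter hv) (List.mem_of_mem_filter hw)
              (hne v hv)
          constructor
          · rw [Finset.disjoint_left]
            intro x hx hxw
            simp only [List.toFinset_cons, Finset.mem_insert, List.mem_toFinset] at hx
            rcases hx with rfl | hx
            · exact hQw.1 (List.mem_toFinset.1 hxw)
            · rcases List.mem_flatten.1 (List.mem_toFinset.1 (by simpa using hx)) with ⟨v, hv, hxv⟩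
              exact Finset.disjoint_left.1 (hrel v hv).1 (List.mem_toFinset.2 hxv) hxw
          · intro x hx y hy
            simp only [List.toFinset_cons, Finset.mem_insert] at hx
            rcases hx with rfl | hx
            · exact hQw.2 y (List.mem_toFinset.1 hy)
            · rcases List.mem_flatten.1 (List.mem_toFinset.1 hx) with ⟨v, hv, hxv⟩
              exact (hrel v hv).2 x (List.mem_toFinset.2 hxv) y hy
        · exact hpair.sublist (List.filter_sublist (l := l))
      · have hperm : (lP ++ lQ).Perm l := List.filter_append_perm p l
        have hflat : ((lP ++ lQ).flatten).Perm l.flatten := hperm.flatten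
        have hQP : lP.flatten.toFinset ∪ lQ.flatten.toFinset = l.flatten.toFinset :=
          Finset.ext fun x => by
            have := hflat.mem_iff (a := x)
            simp only [List.flatten_append, List.mem_append] at this
            simp [this.symm]
        rw [foldr_toFinset] at hunion ⊢
        simp only [List.flatten_cons, List.toFinset_append, List.toFinset_cons]
        rw [Finset.insert_union, hQP, hunion]
end

section
/- Let A be an associative algebra over a field F and let u_1, u_2 ∈ A satisfy u_1 u_2 = r u_2 u_1 with r ∈ F^*, and u_i u_i = u_i u_i trivially. For integers α_1, α_2 ≥ 1, the iterated alternating commutator construction gives: applying ad⁻(u_2) and ad⁻(u_1) alternately to u_1 (where ad⁻(x)(y) = [x,y]⁻ = xy - yx) produces, for a sequence of multiplicities, scalar multiples of u_1^{α_1} u_2^{α_2}; specifically, if ord(r) ∤ α_1 or ord(r^{-1}) ∤ α_2, then u_1^{α_1} u_2^{α_2} lies in the Lie subalgebra of (A, [·,·]⁻) generated by u_1 and u_2, provided u_1^{α_1} u_2^{α_2} ≠ 0. -/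
attribute [local instance] LieRing.ofAssociativeRing

private lemma span_step {F A : Type*} [Field F] [Ring A] [Algebra F A]
    (S : LieSubalgebra F A) {x y z : A} {c : F}
    (hx : x ∈ S) (hy : y ∈ S) (hc : c ≠ 0) (h : ⁅x, y⁆ = c • z) : z ∈ S := by
  have h1 : ⁅x, y⁆ ∈ S := S.lie_mem hx hy
  rw [h] at h1
  have h2 := S.smul_mem c⁻¹ h1
  rwa [smul_smul, inv_mul_cancel₀ hc, one_smul] at h2

theorem stmt6 {F A : Type*} [Field F] [Ring A] [Algebra F A]
    (u₁ u₂ : A) (r : F) (hr : r ≠ 0)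
    (hq : u₁ * u₂ = r • (u₂ * u₁)) (α₁ α₂ : ℕ) (h₁ : 1 ≤ α₁) (h₂ : 1 ≤ α₂)
    (hne : u₁ ^ α₁ * u₂ ^ α₂ ≠ 0)
    (hord : ¬ orderOf r ∣ α₁ ∨ ¬ orderOf r⁻¹ ∣ α₂) :
    u₁ ^ α₁ * u₂ ^ α₂ ∈ LieSubalgebra.lieSpan F A {u₁, u₂} := by
  set s : F := r⁻¹ with hs_def
  have hcomm : u₂ * u₁ = s • (u₁ * u₂) := by
    rw [hq, smul_smul, hs_def, inv_mul_cancel₀ hr, one_smul]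
  -- commutation lemmas
  have L1 : ∀ b : ℕ, u₂ ^ b * u₁ = s ^ b • (u₁ * u₂ ^ b) := by
    intro b
    induction b with
    | zero => simp
    | succ b ih =>
      calc u₂ ^ (b+1) * u₁ = u₂ ^ b * (u₂ * u₁) := by rw [pow_succ, mul_assoc]
      _ = u₂ ^ b * (s • (u₁ * u₂)) := by rw [hcomm]
      _ = s • (u₂ ^ b * u₁ * u₂) := by rw [mul_smul_comm, mul_assoc]
      _ = s • ((s ^ b • (u₁ * u₂ ^ b)) * u₂) := by rw [ih]
      _ = s ^ (b+1) • (u₁ * u₂ ^ (b+1)) := by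
          rw [smul_mul_assoc, smul_smul, mul_comm s, ← pow_succ, mul_assoc, ← pow_succ]
  have L2 : ∀ a : ℕ, u₂ * u₁ ^ a = s ^ a • (u₁ ^ a * u₂) := by
    intro a
    induction a with
    | zero => simp
    | succ a ih =>
      calc u₂ * u₁ ^ (a+1) = (u₂ * u₁ ^ a) * u₁ := by rw [pow_succ, ← mul_assoc]
      _ = (s ^ a • (u₁ ^ a * u₂)) * u₁ := by rw [ih]
      _ = s ^ a • (u₁ ^ a * (u₂ * u₁)) := by rw [smul_mul_assoc, mul_assoc]
      _ = s ^ a • (u₁ ^ a * (s • (u₁ * u₂))) := by rw [hcomm]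
      _ = s ^ (a+1) • (u₁ ^ (a+1) * u₂) := by
          rw [mul_smul_comm, smul_smul, ← pow_succ, ← mul_assoc, ← pow_succ]
  have B1 : ∀ a b : ℕ, ⁅u₁ ^ a * u₂ ^ b, u₁⁆ = (s ^ b - 1) • (u₁ ^ (a+1) * u₂ ^ b) := by
    intro a b
    rw [Ring.lie_def]
    have e1 : u₁ ^ a * u₂ ^ b * u₁ = s ^ b • (u₁ ^ (a+1) * u₂ ^ b) := by
      rw [mul_assoc, L1, mul_smul_comm, pow_succ, mul_assoc]
    have e2 : u₁ * (u₁ ^ a * u₂ ^ b) = u₁ ^ (a+1) * u₂ ^ b := by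
      rw [← mul_assoc, ← pow_succ']
    rw [e1, e2, sub_smul, one_smul]
  have B2 : ∀ a b : ℕ, ⁅u₁ ^ a * u₂ ^ b, u₂⁆ = (1 - s ^ a) • (u₁ ^ a * u₂ ^ (b+1)) := by
    intro a b
    rw [Ring.lie_def]
    have e1 : u₁ ^ a * u₂ ^ b * u₂ = u₁ ^ a * u₂ ^ (b+1) := by
      rw [mul_assoc, ← pow_succ]
    have e2 : u₂ * (u₁ ^ a * u₂ ^ b) = s ^ a • (u₁ ^ a * u₂ ^ (b+1)) := by
      rw [← mul_assoc, L2, smul_mul_assoc, mul_assoc, ← pow_succ']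
    rw [e1, e2, sub_smul, one_smul]
  set S := LieSubalgebra.lieSpan F A {u₁, u₂} with hS
  have hu1 : u₁ ∈ S := LieSubalgebra.subset_lieSpan (by simp)
  have hu2 : u₂ ∈ S := LieSubalgebra.subset_lieSpan (by simp)
  have hbase : s ≠ 1 → u₁ ^ 1 * u₂ ^ 1 ∈ S := by
    intro hs1
    refine span_step S (x := u₁ ^ 1 * u₂ ^ 0) ?_ hu2 (sub_ne_zero.mpr (Ne.symm hs1)) ?_
    · simpa using hu1
    · simpa using B2 1 0
  rcases hord with h | h
  · -- r ^ α₁ ≠ 1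
    have hr1 : r ^ α₁ ≠ 1 := fun hh => h (orderOf_dvd_of_pow_eq_one hh)
    have hsα : s ^ α₁ ≠ 1 := by
      simp only [hs_def, inv_pow, ne_eq, inv_eq_one]; exact hr1
    have hs1 : s ≠ 1 := fun hh => hsα (by rw [hh, one_pow])
    have first : ∀ a : ℕ, u₁ ^ (a+1) * u₂ ^ 1 ∈ S := by
      intro a
      induction a with
      | zero => exact hbase hs1
      | succ a ih =>
        refine span_step S ih hu1 (sub_ne_zero.mpr ?_) (B1 (a+1) 1)
        simpa using hs1
    have second : ∀ b : ℕ, u₁ ^ α₁ * u₂ ^ (b+1) ∈ S := by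
      intro b
      induction b with
      | zero =>
        have := first (α₁ - 1)
        rwa [Nat.sub_add_cancel h₁] at this
      | succ b ih =>
        refine span_step S ih hu2 (sub_ne_zero.mpr (Ne.symm hsα)) (B2 α₁ (b+1))
    have := second (α₂ - 1)
    rwa [Nat.sub_add_cancel h₂] at this
  · -- (r⁻¹) ^ α₂ ≠ 1
    have hsα : s ^ α₂ ≠ 1 := fun hh => h (orderOf_dvd_of_pow_eq_one hh)
    have hs1 : s ≠ 1 := fun hh => hsα (by rw [hh, one_pow])
    have first : ∀ b : ℕ, u₁ ^ 1 * u₂ ^ (b+1) ∈ S := by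
      intro b
      induction b with
      | zero => exact hbase hs1
      | succ b ih =>
        refine span_step S ih hu2 (sub_ne_zero.mpr ?_) (B2 1 (b+1))
        simpa using (Ne.symm hs1)
    have second : ∀ a : ℕ, u₁ ^ (a+1) * u₂ ^ α₂ ∈ S := by
      intro a
      induction a with
      | zero =>
        have := first (α₂ - 1)
        rwa [Nat.sub_add_cancel h₂] at this
      | succ a ih =>
        refine span_step S ih hu1 (sub_ne_zero.mpr hsα) (B1 (a+1) α₂)
    have := second (α₁ - 1)
    rwa [Nat.sub_add_cancel h₁] at this
end

section
/- Let A be an associative algebra over a field F and u_1, ..., u_k ∈ A homogeneous elements with u_i u_j = r_{i,j} u_j u_i for nonzero scalars r_{i,j}, and r_{i,j} = 1 when u_i = u_j. Writing l_i for the operator ad⁻(u_i) : x ↦ u_i x - x u_i, for all m_2, ..., m_k ≥ 1 one has l_k^{m_k} l_{k-1}^{m_{k-1}} ⋯ l_2^{m_2}(u_1) = λ_2^{m_2} λ_3^{m_3} ⋯ λ_k^{m_k} · u_1 u_2^{m_2} ⋯ u_k^{m_k}, where λ_i := r_{i,1} r_{i,2}^{m_2} ⋯ r_{i,i-1}^{m_{i-1}}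 - 1 for 2 ≤ i ≤ k. -/
/-- The commutator operator `ad⁻(a) : x ↦ a x - x a`. -/
def adC {A : Type*} [Ring A] (a x : A) : A := a * x - x * a

/-- `opChain u m j x = l_{j+1}^{m_{j+1}} ⋯ l_2^{m_2}(x)` where `l_i = ad⁻(u i)`. -/
def opChain {A : Type*} [Ring A] (u : ℕ → A) (m : ℕ → ℕ) : ℕ → A → A
  | 0, x => x
  | (j + 1), x => (adC (u (j + 2)))^[m (j + 2)] (opChain u m j x)

section aux

variable {F A : Type*} [Field F] [Ring A] [Algebra F A]

lemma qc_mul {a x y : A} {c d : F} (hx : a * x = c • (x * a)) (hy : a * y = d • (y * a)) :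
    a * (x * y) = (c * d) • (x * y * a) := by
  calc a * (x * y) = (a * x) * y := by rw [mul_assoc]
    _ = c • (x * (a * y)) := by rw [hx, smul_mul_assoc, mul_assoc]
    _ = (c * d) • (x * y * a) := by rw [hy, mul_smul_comm, smul_smul, mul_assoc]

lemma qc_pow {a x : A} {c : F} (hx : a * x = c • (x * a)) (n : ℕ) :
    a * x ^ n = c ^ n • (x ^ n * a) := by
  induction n with
  | zero => simp
  | succ n ih =>
    rw [pow_succ, pow_succ]
    exact qc_mul ih hx

lemma adC_smul (a : A) (s : F) (x : A) : adC a (s • x) = s • adC a x := by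
  unfold adC; rw [mul_smul_comm, smul_mul_assoc, smul_sub]

lemma adC_iter_smul (a : A) (s : F) (x : A) (n : ℕ) :
    (adC a)^[n] (s • x) = s • (adC a)^[n] x := by
  induction n with
  | zero => rfl
  | succ n ih => rw [Function.iterate_succ_apply', Function.iterate_succ_apply', ih, adC_smul]

lemma adC_iter_qc {a x : A} {c : F} (hx : a * x = c • (x * a)) (n : ℕ) :
    (adC a)^[n] x = (c - 1) ^ n • (x * a ^ n) := by
  induction n with
  | zero => simp
  | succ n ih =>
    rw [Function.iterate_succ_apply', ih, adC_smul]
    have : adC a (x * a ^ n) = (c - 1) • (x * a ^ (n + 1)) := by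
      unfold adC
      rw [← mul_assoc, hx, smul_mul_assoc, mul_assoc, ← pow_succ',
        sub_smul, one_smul, mul_assoc, ← pow_succ]
    rw [this, smul_smul, ← pow_succ]

end aux

theorem stmt7 {F A : Type*} [Field F] [Ring A] [Algebra F A] (k : ℕ) (hk : 1 ≤ k)
    (u : ℕ → A) (r : ℕ → ℕ → F) (m : ℕ → ℕ)
    (hr : ∀ i j, r i j ≠ 0)
    (hqc : ∀ i j, u i * u j = r i j • (u j * u i))
    (h1 : ∀ i j, u i = u j → r i j = 1)
    (hm : ∀ i, 2 ≤ i → i ≤ k → 1 ≤ m i) :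
    opChain u m (k - 1) (u 1) =
      (∏ i ∈ Finset.Icc 2 k,
          ((r i 1 * ∏ j ∈ Finset.Ico 2 i, r i j ^ m j) - 1) ^ m i) •
        (u 1 * ((List.range (k - 1)).map (fun j => u (j + 2) ^ m (j + 2))).prod) := by
  -- commuting lemma
  have key : ∀ i n, u i * (u 1 * ((List.range n).map (fun j => u (j + 2) ^ m (j + 2))).prod)
      = (r i 1 * ∏ j ∈ Finset.Ico 2 (n + 2), r i j ^ m j) •
        ((u 1 * ((List.range n).map (fun j => u (j + 2) ^ m (j + 2))).prod) * u i) := by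
    intro i n
    induction n with
    | zero => simpa using hqc i 1
    | succ n ih =>
      rw [List.range_succ, List.map_append, List.prod_append, List.map_singleton,
        List.prod_singleton]
      have h2 := qc_pow (hqc i (n + 2)) (m (n + 2))
      have h3 := qc_mul ih h2
      rw [← mul_assoc (u 1), h3, Finset.prod_Ico_succ_top (by omega : 2 ≤ n + 2),
        ← mul_assoc (r i 1)]
  -- main induction
  have main : ∀ n, opChain u m n (u 1) =
      (∏ i ∈ Finset.Icc 2 (n + 1),
          ((r i 1 * ∏ j ∈ Finset.Ico 2 i, r i j ^ m j) - 1) ^ m i) •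
        (u 1 * ((List.range n).map (fun j => u (j + 2) ^ m (j + 2))).prod) := by
    intro n
    induction n with
    | zero => simp [opChain]
    | succ n ih =>
      show (adC (u (n + 2)))^[m (n + 2)] (opChain u m n (u 1)) = _
      rw [ih, adC_iter_smul, adC_iter_qc (key (n + 2) n) (m (n + 2)), smul_smul,
        ← Finset.prod_Icc_succ_top (by omega : 2 ≤ n + 2)]
      rw [List.range_succ, List.map_append, List.prod_append, List.map_singleton,
        List.prod_singleton, ← mul_assoc]
  have hk1 : k - 1 + 1 = k := by omega
  rw [main (k - 1), hk1]
end

section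
/- Let A be an associative algebra over a field F of characteristic zero, generated by elements x_1, ..., x_n satisfying x_i x_j = q_{ij} x_j x_i for all i ≠ j with q_{ij} q_{ji} = 1 (a quantum linear space), and x_i^{N_i} = 0 where N_i = ord(q_{ii}) ≥ 2. Suppose further the monomials x_1^{a_1} ⋯ x_n^{a_n} with 0 ≤ a_i < N_i form a basis of A. Then the Lie subalgebra 𝔏⁻ of (A, [·,·]⁻) (commutator bracket) generated by x_1, ..., x_n contains no element with a nonzero coefficient on any monomial x_i^{m} with m ≥ 2, i.e., x_i^m ∉ 𝔏⁻ for 2 ≤ m < N_i. -/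
section aux
variable {F A : Type*} [Field F] [Ring A] [Algebra F A]

lemma aux_swap1 {u v : A} (h : ∃ c : F, u * v = c • (v * u)) (t : ℕ) :
    ∃ c : F, u * v ^ t = c • (v ^ t * u) := by
  induction t with
  | zero => exact ⟨1, by simp⟩
  | succ t ih =>
    obtain ⟨c, hc⟩ := ih
    obtain ⟨c0, hc0⟩ := h
    refine ⟨c * c0, ?_⟩
    rw [pow_succ, ← mul_assoc, hc, smul_mul_assoc, mul_assoc, hc0,
      mul_smul_comm, smul_smul, mul_assoc]

lemma aux_swap {u v : A} (h : ∃ c : F, u * v = c • (v * u)) (s t : ℕ) :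
    ∃ c : F, u ^ s * v ^ t = c • (v ^ t * u ^ s) := by
  induction s with
  | zero => exact ⟨1, by simp⟩
  | succ s ih =>
    obtain ⟨c, hc⟩ := ih
    obtain ⟨c0, hc0⟩ := aux_swap1 h t
    refine ⟨c0 * c, ?_⟩
    rw [pow_succ, mul_assoc, hc0, mul_smul_comm, ← mul_assoc, hc,
      smul_mul_assoc, smul_smul, mul_assoc]

lemma aux_list (y : A) : ∀ L : List A, (∀ z ∈ L, ∃ c : F, z * y = c • (y * z)) →
    ∃ c : F, L.prod * y = c • (y * L.prod) := by
  intro L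
  induction L with
  | nil => exact fun _ => ⟨1, by simp⟩
  | cons z L ih =>
    intro h
    obtain ⟨c, hc⟩ := ih (fun w hw => h w (List.mem_cons_of_mem _ hw))
    obtain ⟨c0, hc0⟩ := h z List.mem_cons_self
    refine ⟨c * c0, ?_⟩
    rw [List.prod_cons, mul_assoc, hc, mul_smul_comm, ← mul_assoc, hc0,
      smul_mul_assoc, smul_smul, mul_assoc]

lemma aux_main : ∀ (k : ℕ) (x : Fin k → A),
    (∀ i j, i ≠ j → ∃ c : F, x i * x j = c • (x j * x i)) →
    ∀ a b : Fin k → ℕ, ∃ c : F,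
      (List.ofFn fun i => x i ^ a i).prod * (List.ofFn fun i => x i ^ b i).prod
        = c • (List.ofFn fun i => x i ^ (a i + b i)).prod := by
  intro k
  induction k with
  | zero => exact fun x _ a b => ⟨1, by simp⟩
  | succ k ih =>
    intro x hx a b
    have hx' : ∀ i j : Fin k, i ≠ j →
        ∃ c : F, x i.succ * x j.succ = c • (x j.succ * x i.succ) :=
      fun i j hij => hx i.succ j.succ (fun h => hij (Fin.succ_injective _ h))
    obtain ⟨c2, hc2⟩ := ih (fun i => x i.succ) hx' (fun i => a i.succ) (fun i => b i.succ)
    obtain ⟨c1, hc1⟩ := aux_list (x 0 ^ b 0) (List.ofFn fun i : Fin k => x i.succ ^ a i.succ)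
      (by
        intro z hz
        rw [List.mem_ofFn] at hz
        obtain ⟨i, rfl⟩ := hz
        exact aux_swap (hx i.succ 0 (Fin.succ_ne_zero i)) _ _)
    refine ⟨c1 * c2, ?_⟩
    rw [List.ofFn_succ (f := fun i => x i ^ a i), List.ofFn_succ (f := fun i => x i ^ b i),
      List.ofFn_succ (f := fun i => x i ^ (a i + b i)), List.prod_cons, List.prod_cons,
      List.prod_cons]
    calc x 0 ^ a 0 * (List.ofFn fun i : Fin k => x i.succ ^ a i.succ).prod *
          (x 0 ^ b 0 * (List.ofFn fun i : Fin k => x i.succ ^ b i.succ).prod)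
        = x 0 ^ a 0 * ((List.ofFn fun i : Fin k => x i.succ ^ a i.succ).prod *
          x 0 ^ b 0) * (List.ofFn fun i : Fin k => x i.succ ^ b i.succ).prod := by
          rw [mul_assoc, mul_assoc, mul_assoc]
      _ = c1 • (x 0 ^ (a 0 + b 0) *
            ((List.ofFn fun i : Fin k => x i.succ ^ a i.succ).prod *
             (List.ofFn fun i : Fin k => x i.succ ^ b i.succ).prod)) := by
          rw [hc1, mul_smul_comm, smul_mul_assoc, pow_add]
          rw [mul_assoc, mul_assoc, mul_assoc]
      _ = (c1 * c2) • (x 0 ^ (a 0 + b 0) *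
            (List.ofFn fun i : Fin k => x i.succ ^ (a i.succ + b i.succ)).prod) := by
          rw [hc2, mul_smul_comm, smul_smul]

lemma aux_single : ∀ (k : ℕ) (f : Fin k → A) (j : Fin k), (∀ i, i ≠ j → f i = 1) →
    (List.ofFn f).prod = f j := by
  intro k
  induction k with
  | zero => exact fun f j => j.elim0
  | succ k ih =>
    intro f j h
    rw [List.ofFn_succ, List.prod_cons]
    rcases Fin.eq_zero_or_eq_succ j with rfl | ⟨j', rfl⟩
    · rw [List.prod_eq_one, mul_one]
      intro z hz
      rw [List.mem_ofFn] at hz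
      obtain ⟨i, rfl⟩ := hz
      exact h i.succ (Fin.succ_ne_zero i)
    · rw [h 0 (Fin.succ_ne_zero j').symm, one_mul]
      exact ih (fun i => f i.succ) j' (fun i hi => h i.succ (fun hh => hi (Fin.succ_injective _ hh)))

end aux

attribute [local instance 100] LieRing.ofAssociativeRing

theorem stmt16 {F A : Type*} [Field F] [CharZero F] [Ring A] [Algebra F A]
    (n : ℕ) (x : Fin n → A) (q : Fin n → Fin n → F) (N : Fin n → ℕ)
    (hN : ∀ i, 2 ≤ N i)
    (hord : ∀ i, q i i ^ N i = 1 ∧ ∀ k, 0 < k → k < N i → q i i ^ k ≠ 1)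
    (hcomm : ∀ i j, i ≠ j → x i * x j = q i j • (x j * x i))
    (hinv : ∀ i j, i ≠ j → q i j * q j i = 1)
    (hnil : ∀ i, x i ^ N i = 0)
    (B : Module.Basis ((i : Fin n) → Fin (N i)) F A)
    (hB : ∀ a, B a = (List.ofFn (fun i => x i ^ (a i : ℕ))).prod) :
    ∀ i m, 2 ≤ m → m < N i →
      x i ^ m ∉ LieSubalgebra.lieSpan F A (Set.range x) := by
  classical
  intro i m hm2 hmN hmem
  set Bad : ((i : Fin n) → Fin (N i)) → Prop :=
    fun a => ∃ i0, 2 ≤ (a i0 : ℕ) ∧ ∀ j, j ≠ i0 → (a j : ℕ) = 0 with hBadDef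
  set S : Submodule F A := Submodule.span F (B '' {a | ¬ Bad a}) with hSdef
  have hx : ∀ j k, j ≠ k → ∃ c : F, x j * x k = c • (x k * x j) :=
    fun j k h => ⟨q j k, hcomm j k h⟩
  -- overflow
  have hoverflow : ∀ e : Fin n → ℕ, (∃ i0, N i0 ≤ e i0) →
      (List.ofFn fun j => x j ^ e j).prod = 0 := by
    rintro e ⟨i0, hi0⟩
    apply List.prod_eq_zero
    rw [List.mem_ofFn]
    refine ⟨i0, ?_⟩
    show x i0 ^ e i0 = 0
    have : x i0 ^ e i0 = x i0 ^ N i0 * x i0 ^ (e i0 - N i0) := by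
      rw [← pow_add, Nat.add_sub_cancel' hi0]
    rw [this, hnil, zero_mul]
  -- key bracket lemma
  have key : ∀ a b, ¬ Bad a → ¬ Bad b → ⁅(B a : A), B b⁆ ∈ S := by
    intro a b ha hb
    by_cases hab : a = b
    · subst hab; rw [lie_self]; exact S.zero_mem
    obtain ⟨c, hc⟩ := aux_main n x hx (fun j => (a j : ℕ)) (fun j => (b j : ℕ))
    obtain ⟨c', hc'⟩ := aux_main n x hx (fun j => (b j : ℕ)) (fun j => (a j : ℕ))
    have hsum : (List.ofFn fun j => x j ^ ((b j : ℕ) + (a j : ℕ)))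
        = (List.ofFn fun j => x j ^ ((a j : ℕ) + (b j : ℕ))) := by
      congr 1
      funext j
      rw [Nat.add_comm]
    rw [hsum] at hc'
    have hbr : ⁅(B a : A), B b⁆
        = (c - c') • (List.ofFn fun j => x j ^ ((a j : ℕ) + (b j : ℕ))).prod := by
      rw [Ring.lie_def, hB a, hB b, hc, hc', sub_smul]
    by_cases hov : ∃ i0, N i0 ≤ (a i0 : ℕ) + (b i0 : ℕ)
    · rw [hbr, hoverflow _ hov, smul_zero]; exact S.zero_mem
    push_neg at hov
    set ab : (i : Fin n) → Fin (N i) := fun j => ⟨(a j : ℕ) + (b j : ℕ), hov j⟩ with habdef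
    have hPab : (List.ofFn fun j => x j ^ ((a j : ℕ) + (b j : ℕ))).prod = B ab :=
      (hB ab).symm
    have hgoodab : ¬ Bad ab := by
      rintro ⟨i0, h2, h0⟩
      have h2' : 2 ≤ (a i0 : ℕ) + (b i0 : ℕ) := h2
      have hz : ∀ j, j ≠ i0 → (a j : ℕ) = 0 ∧ (b j : ℕ) = 0 := by
        intro j hj
        have := h0 j hj
        simp only [habdef] at this
        omega
      have ha1 : (a i0 : ℕ) ≤ 1 := by
        by_contra hgt
        exact ha ⟨i0, by omega, fun j hj => (hz j hj).1⟩
      have hb1 : (b i0 : ℕ) ≤ 1 := by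
        by_contra hgt
        exact hb ⟨i0, by omega, fun j hj => (hz j hj).2⟩
      apply hab
      funext j
      by_cases hj : j = i0
      · subst hj; exact Fin.ext (by omega)
      · exact Fin.ext (by have := hz j hj; omega)
    rw [hbr, hPab]
    exact S.smul_mem _ (Submodule.subset_span ⟨ab, hgoodab, rfl⟩)
  -- S is closed under bracket
  have hlie : ∀ u ∈ S, ∀ v ∈ S, ⁅u, v⁆ ∈ S := by
    intro u hu
    induction hu using Submodule.span_induction with
    | mem u hu =>
      obtain ⟨a, ha, rfl⟩ := hu
      intro v hv
      induction hv using Submodule.span_induction with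
      | mem v hv =>
        obtain ⟨b, hb, rfl⟩ := hv
        exact key a b ha hb
      | zero => rw [lie_zero]; exact S.zero_mem
      | add v w _ _ ihv ihw => rw [lie_add]; exact S.add_mem ihv ihw
      | smul c v _ ihv => rw [lie_smul]; exact S.smul_mem c ihv
    | zero => intro v hv; rw [zero_lie]; exact S.zero_mem
    | add u w _ _ ihu ihw =>
      intro v hv; rw [add_lie]; exact S.add_mem (ihu v hv) (ihw v hv)
    | smul c u _ ihu =>
      intro v hv; rw [smul_lie]; exact S.smul_mem c (ihu v hv)
  set K : LieSubalgebra F A := ⟨S, fun {u v} hu hv => hlie u hu v hv⟩ with hKdef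
  have hgen : Set.range x ⊆ ↑K := by
    rintro _ ⟨j, rfl⟩
    set e : (i : Fin n) → Fin (N i) := fun i' =>
      if h : i' = j then ⟨1, by have := hN i'; omega⟩ else ⟨0, by have := hN i'; omega⟩
      with hedef
    have hxj : B e = x j := by
      rw [hB e, aux_single n _ j]
      · simp [hedef]
      · intro i' hi'
        simp [hedef, hi']
    have hegood : ¬ Bad e := by
      rintro ⟨i0, h2, -⟩
      by_cases h : i0 = j <;> simp [hedef, h] at h2
    have : B e ∈ S := Submodule.subset_span ⟨e, hegood, rfl⟩
    rw [hxj] at this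
    exact this
  have hle : LieSubalgebra.lieSpan F A (Set.range x) ≤ K :=
    LieSubalgebra.lieSpan_le.mpr hgen
  have hxm : x i ^ m ∈ S := hle hmem
  -- x i ^ m = B a0 with a0 Bad
  set a0 : (i : Fin n) → Fin (N i) := fun j =>
    if h : j = i then ⟨m, h ▸ hmN⟩ else ⟨0, by have := hN j; omega⟩ with ha0def
  have hxa0 : B a0 = x i ^ m := by
    rw [hB a0, aux_single n _ i]
    · simp [ha0def]
    · intro i' hi'
      simp [ha0def, hi']
  have ha0bad : Bad a0 := by
    refine ⟨i, ?_, ?_⟩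
    · simp [ha0def]; exact hm2
    · intro j hj; simp [ha0def, hj]
  rw [← hxa0] at hxm
  exact (LinearIndependent.notMem_span_image B.linearIndependent
    (by simpa using ha0bad : a0 ∉ {a | ¬ Bad a})) hxm
end

section
/- Let A be the quantum linear space algebra over a field F of characteristic zero with two generators x_1, x_2: x_1 x_2 = q_{12} x_2 x_1, q_{12} q_{21} = 1, x_i^{N_i} = 0 where N_i is the order of q_{ii} (set N_i = ∞ if q_{ii} = 1), and with PBW basis {x_2^{α_2} x_1^{α_1} : 0 ≤ α_i < N_i}. Then the Lie subalgebra 𝔏⁻(V) of (A, [·,·]⁻) generated by x_1 and x_2 equals the span of {x_1, x_2} ∪ {x_2^{α_2} x_1^{α_1} : 1 ≤ α_2 < N_2, 1 ≤ α_1 < N_1, and (ord(q_{12}) ∤ α_2 or ord(q_{12}) ∤ α_1)}. -/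
attribute [local instance 100] LieRing.ofAssociativeRing

theorem stmt17 {F A : Type*} [Field F] [CharZero F] [Ring A] [Algebra F A]
    (x1 x2 : A) (q11 q22 q12 q21 : F) (N1 N2 : ℕ)  -- `N i = 0` encodes `N_i = ∞`
    (hq12 : q12 ≠ 0)
    (hcomm : x1 * x2 = q12 • (x2 * x1)) (hinv : q12 * q21 = 1)
    (hN1 : (q11 = 1 → N1 = 0) ∧ (q11 ≠ 1 → N1 = orderOf q11 ∧ x1 ^ N1 = 0))
    (hN2 : (q22 = 1 → N2 = 0) ∧ (q22 ≠ 1 → N2 = orderOf q22 ∧ x2 ^ N2 = 0))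
    (B : Module.Basis {p : ℕ × ℕ // (N1 = 0 ∨ p.1 < N1) ∧ (N2 = 0 ∨ p.2 < N2)} F A)
    (hB : ∀ p, B p = x2 ^ (p : ℕ × ℕ).2 * x1 ^ (p : ℕ × ℕ).1) :
    (LieSubalgebra.lieSpan F A {x1, x2}).toSubmodule =
      Submodule.span F ({x1, x2} ∪
        {y : A | ∃ a2 a1 : ℕ, 1 ≤ a2 ∧ (N2 = 0 ∨ a2 < N2) ∧
          1 ≤ a1 ∧ (N1 = 0 ∨ a1 < N1) ∧
          (¬ orderOf q12 ∣ a2 ∨ ¬ orderOf q12 ∣ a1) ∧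
          y = x2 ^ a2 * x1 ^ a1}) := by
  set d := orderOf q12 with hd
  set S : Set A := ({x1, x2} ∪
        {y : A | ∃ a2 a1 : ℕ, 1 ≤ a2 ∧ (N2 = 0 ∨ a2 < N2) ∧
          1 ≤ a1 ∧ (N1 = 0 ∨ a1 < N1) ∧
          (¬ d ∣ a2 ∨ ¬ d ∣ a1) ∧
          y = x2 ^ a2 * x1 ^ a1}) with hS
  -- basic commutation lemmas
  have h1 : ∀ c : ℕ, x1 * x2 ^ c = q12 ^ c • (x2 ^ c * x1) := by
    intro c
    induction c with
    | zero => simp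
    | succ n ih =>
      rw [pow_succ, ← mul_assoc, ih, smul_mul_assoc, mul_assoc, hcomm, mul_smul_comm,
        smul_smul, ← pow_succ, ← mul_assoc]
  have h2 : ∀ b c : ℕ, x1 ^ b * x2 ^ c = q12 ^ (b * c) • (x2 ^ c * x1 ^ b) := by
    intro b c
    induction b with
    | zero => simp
    | succ n ih =>
      rw [pow_succ, mul_assoc, h1, mul_smul_comm, ← mul_assoc, ih, smul_mul_assoc,
        smul_smul, ← pow_add, mul_assoc, ← pow_succ]
      ring_nf
  have hmul : ∀ a b c e : ℕ,
      (x2 ^ a * x1 ^ b) * (x2 ^ c * x1 ^ e)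
        = q12 ^ (b * c) • (x2 ^ (a + c) * x1 ^ (b + e)) := by
    intro a b c e
    calc (x2 ^ a * x1 ^ b) * (x2 ^ c * x1 ^ e)
        = x2 ^ a * (x1 ^ b * x2 ^ c) * x1 ^ e := by rw [mul_assoc, mul_assoc, mul_assoc]
      _ = q12 ^ (b * c) • (x2 ^ a * (x2 ^ c * x1 ^ b) * x1 ^ e) := by
          rw [h2, mul_smul_comm, smul_mul_assoc]
      _ = q12 ^ (b * c) • (x2 ^ (a + c) * x1 ^ (b + e)) := by
          rw [pow_add, pow_add]
          simp only [mul_assoc]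
  have hbr : ∀ a b c e : ℕ,
      ⁅(x2 ^ a * x1 ^ b), (x2 ^ c * x1 ^ e)⁆
        = (q12 ^ (b * c) - q12 ^ (e * a)) • (x2 ^ (a + c) * x1 ^ (b + e)) := by
    intro a b c e
    rw [Ring.lie_def, hmul, hmul, sub_smul, Nat.add_comm c a, Nat.add_comm e b]
  -- power mod order
  have hpm : ∀ m : ℕ, q12 ^ m = q12 ^ (m % d) := by
    intro m
    conv_lhs => rw [← Nat.mod_add_div m d]
    rw [pow_add, pow_mul, hd, pow_orderOf_eq_one, one_pow, mul_one]
  have hscalar : ∀ a b c e : ℕ, d ∣ (a + c) → d ∣ (b + e) →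
      q12 ^ (b * c) = q12 ^ (e * a) := by
    intro a b c e h1' h2'
    rw [hpm (b * c), hpm (e * a)]
    have m1 : (b * c + b * a) ≡ 0 [MOD d] := by
      have : d ∣ b * c + b * a := by
        have : b * c + b * a = b * (a + c) := by ring
        rw [this]; exact Dvd.dvd.mul_left h1' b
      simpa [Nat.modEq_zero_iff_dvd] using this
    have m2 : (e * a + b * a) ≡ 0 [MOD d] := by
      have : d ∣ e * a + b * a := by
        have : e * a + b * a = a * (b + e) := by ring
        rw [this]; exact Dvd.dvd.mul_left h2' a
      simpa [Nat.modEq_zero_iff_dvd] using this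
    have : (b * c) ≡ (e * a) [MOD d] := Nat.ModEq.add_right_cancel' (b * a) (m1.trans m2.symm)
    exact congrArg (q12 ^ ·) this
  -- nilpotency
  have hx1z : ∀ b : ℕ, N1 ≠ 0 → N1 ≤ b → x1 ^ b = 0 := by
    intro b h hb
    have hq : q11 ≠ 1 := fun he => h (hN1.1 he)
    obtain ⟨-, hz⟩ := hN1.2 hq
    calc x1 ^ b = x1 ^ N1 * x1 ^ (b - N1) := by rw [← pow_add, Nat.add_sub_cancel' hb]
      _ = 0 := by rw [hz, zero_mul]
  have hx2z : ∀ a : ℕ, N2 ≠ 0 → N2 ≤ a → x2 ^ a = 0 := by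
    intro a h ha
    have hq : q22 ≠ 1 := fun he => h (hN2.1 he)
    obtain ⟨-, hz⟩ := hN2.2 hq
    calc x2 ^ a = x2 ^ N2 * x2 ^ (a - N2) := by rw [← pow_add, Nat.add_sub_cancel' ha]
      _ = 0 := by rw [hz, zero_mul]
  -- monomials land in the span (or are zero)
  have mono_mem : ∀ a b : ℕ, 1 ≤ a → 1 ≤ b → (¬ d ∣ a ∨ ¬ d ∣ b) →
      x2 ^ a * x1 ^ b ∈ Submodule.span F S := by
    intro a b ha hb hdv
    by_cases h2r : N2 = 0 ∨ a < N2
    · by_cases h1r : N1 = 0 ∨ b < N1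
      · exact Submodule.subset_span (Or.inr ⟨a, b, ha, h2r, hb, h1r, hdv, rfl⟩)
      · push_neg at h1r
        rw [hx1z b h1r.1 h1r.2, mul_zero]
        exact Submodule.zero_mem _
    · push_neg at h2r
      rw [hx2z a h2r.1 h2r.2, zero_mul]
      exact Submodule.zero_mem _
  -- brackets of monomials are in the span
  have key : ∀ a b c e : ℕ,
      ⁅(x2 ^ a * x1 ^ b), (x2 ^ c * x1 ^ e)⁆ ∈ Submodule.span F S := by
    intro a b c e
    rw [hbr]
    by_cases hz : q12 ^ (b * c) = q12 ^ (e * a)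
    · rw [hz, sub_self, zero_smul]; exact Submodule.zero_mem _
    · refine Submodule.smul_mem _ _ (mono_mem _ _ ?_ ?_ ?_)
      · by_contra h
        have hac : a + c = 0 := by omega
        have : a = 0 ∧ c = 0 := by omega
        exact hz (by rw [this.1, this.2, Nat.mul_zero, Nat.mul_zero])
      · by_contra h
        have : b = 0 ∧ e = 0 := by omega
        exact hz (by rw [this.1, this.2, Nat.zero_mul, Nat.zero_mul])
      · by_contra h
        push_neg at h
        exact hz (hscalar a b c e h.1 h.2)
  -- every generator is a monomial
  have hgen : ∀ y ∈ S, ∃ a b : ℕ, y = x2 ^ a * x1 ^ b := by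
    intro y hy
    rcases hy with (hy | hy) | hy
    · exact ⟨0, 1, by simp [hy]⟩
    · simp only [Set.mem_singleton_iff] at hy
      exact ⟨1, 0, by simp [hy]⟩
    · obtain ⟨a, b, -, -, -, -, -, hy⟩ := hy
      exact ⟨a, b, hy⟩
  -- span S is closed under bracket
  have hclosed : ∀ u ∈ Submodule.span F S, ∀ v ∈ Submodule.span F S,
      ⁅u, v⁆ ∈ Submodule.span F S := by
    intro u hu
    induction hu using Submodule.span_induction with
    | mem x hx =>
      intro v hv
      induction hv using Submodule.span_induction with
      | mem y hy =>
        obtain ⟨a, b, rfl⟩ := hgen x hx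
        obtain ⟨c, e, rfl⟩ := hgen y hy
        exact key a b c e
      | zero => simp
      | add y z _ _ hy hz => rw [lie_add]; exact Submodule.add_mem _ hy hz
      | smul t y _ hy => rw [lie_smul]; exact Submodule.smul_mem _ _ hy
    | zero => intro v hv; simp
    | add y z _ _ hy hz =>
      intro v hv
      rw [add_lie]; exact Submodule.add_mem _ (hy v hv) (hz v hv)
    | smul t y _ hy =>
      intro v hv
      rw [smul_lie]; exact Submodule.smul_mem _ _ (hy v hv)
  set L := LieSubalgebra.lieSpan F A {x1, x2} with hL
  have hx1L : x1 ∈ L := LieSubalgebra.subset_lieSpan (by simp)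
  have hx2L : x2 ∈ L := LieSubalgebra.subset_lieSpan (by simp)
  -- step lemmas
  have hbr1 : ∀ a b : ℕ, ⁅x1, x2 ^ a * x1 ^ b⁆ = (q12 ^ a - 1) • (x2 ^ a * x1 ^ (b + 1)) := by
    intro a b
    have := hbr 0 1 a b
    simpa [Nat.add_comm] using this
  have hbr2 : ∀ a b : ℕ, ⁅x2, x2 ^ a * x1 ^ b⁆ = (1 - q12 ^ b) • (x2 ^ (a + 1) * x1 ^ b) := by
    intro a b
    have := hbr 1 0 a b
    simpa [Nat.add_comm] using this
  have step_b : ∀ a b : ℕ, ¬ d ∣ a → x2 ^ a * x1 ^ b ∈ L → x2 ^ a * x1 ^ (b + 1) ∈ L := by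
    intro a b hdv hm
    have hs : q12 ^ a - 1 ≠ 0 :=
      sub_ne_zero.2 (fun h => hdv (orderOf_dvd_iff_pow_eq_one.2 h))
    have : x2 ^ a * x1 ^ (b + 1) = (q12 ^ a - 1)⁻¹ • ⁅x1, x2 ^ a * x1 ^ b⁆ := by
      rw [hbr1, smul_smul, inv_mul_cancel₀ hs, one_smul]
    rw [this]
    exact L.smul_mem _ (L.lie_mem hx1L hm)
  have step_a : ∀ a b : ℕ, ¬ d ∣ b → x2 ^ a * x1 ^ b ∈ L → x2 ^ (a + 1) * x1 ^ b ∈ L := by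
    intro a b hdv hm
    have hs : 1 - q12 ^ b ≠ 0 :=
      sub_ne_zero.2 (fun h => hdv (orderOf_dvd_iff_pow_eq_one.2 h.symm))
    have : x2 ^ (a + 1) * x1 ^ b = (1 - q12 ^ b)⁻¹ • ⁅x2, x2 ^ a * x1 ^ b⁆ := by
      rw [hbr2, smul_smul, inv_mul_cancel₀ hs, one_smul]
    rw [this]
    exact L.smul_mem _ (L.lie_mem hx2L hm)
  -- monomials with good exponents are in L
  have mono_L : ∀ a b : ℕ, 1 ≤ a → 1 ≤ b → (¬ d ∣ a ∨ ¬ d ∣ b) →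
      x2 ^ a * x1 ^ b ∈ L := by
    intro a b ha hb hdv
    have hd1 : ¬ d ∣ 1 := by
      intro h
      have hone : d = 1 := Nat.dvd_one.mp h
      rcases hdv with h' | h' <;> exact h' (hone ▸ one_dvd _)
    rcases hdv with hda | hdb
    · have colA : ∀ k : ℕ, x2 ^ k * x1 ^ 1 ∈ L := by
        intro k
        induction k with
        | zero => simpa using hx1L
        | succ n ih => exact step_a n 1 hd1 ih
      have colB : ∀ k : ℕ, x2 ^ a * x1 ^ (1 + k) ∈ L := by
        intro k
        induction k with
        | zero => simpa using colA a
        | succ n ih => simpa [Nat.add_assoc] using step_b a (1 + n) hda ih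
      have : b = 1 + (b - 1) := by omega
      rw [this]; exact colB (b - 1)
    · have colA : ∀ k : ℕ, x2 ^ 1 * x1 ^ k ∈ L := by
        intro k
        induction k with
        | zero => simpa using hx2L
        | succ n ih =>
          rcases Nat.eq_zero_or_pos n with rfl | hn
          · exact step_b 1 0 hd1 ih
          · exact step_b 1 n hd1 ih
      have colB : ∀ k : ℕ, x2 ^ (1 + k) * x1 ^ b ∈ L := by
        intro k
        induction k with
        | zero => simpa using colA b
        | succ n ih => simpa [Nat.add_assoc] using step_a (1 + n) b hdb ih
      have : a = 1 + (a - 1) := by omega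
      rw [this]; exact colB (a - 1)
  -- assemble
  apply le_antisymm
  · -- L ⊆ span S
    set K : LieSubalgebra F A :=
      { Submodule.span F S with
        lie_mem' := fun {u v} hu hv => hclosed u hu v hv } with hK
    have hle : L ≤ K := by
      rw [hL]
      apply LieSubalgebra.lieSpan_le.2
      intro y hy
      rcases hy with rfl | hy
      · exact Submodule.subset_span (Or.inl (by simp))
      · simp only [Set.mem_singleton_iff] at hy
        subst hy
        exact Submodule.subset_span (Or.inl (by simp))
    intro z hz
    exact hle hz
  · -- span S ⊆ L
    apply Submodule.span_le.2
    intro y hy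
    rcases hy with (hy | hy) | hy
    · exact hy ▸ hx1L
    · simp only [Set.mem_singleton_iff] at hy
      exact hy ▸ hx2L
    · obtain ⟨a, b, ha, -, hb, -, hdv, rfl⟩ := hy
      exact mono_L a b ha hb hdv
end

section
/- Let F have characteristic zero, let q_{12} = -1, and let A be the rank-2 quantum linear space with ord(q_{11}) = 3, ord(q_{22}) = 5 (so x_1³ = 0, x_2⁵ = 0, x_1 x_2 = -x_2 x_1, and PBW basis x_2^{α_2} x_1^{α_1}, 0 ≤ α_1 < 3, 0 ≤ α_2 < 5). Then the Lie subalgebra of (A, [·,·]⁻) generated by x_1, x_2 has basis {x_1, x_2, x_2 x_1, x_2 x_1², x_2² x_1, x_2³ x_1, x_2³ x_1², x_2⁴ x_1}, and in particular has dimension 8. -/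
attribute [local instance 100] LieRing.ofAssociativeRing

section
variable {A : Type*} [Ring A]

lemma swap1 (x1 x2 : A) (hcomm : x1 * x2 = -(x2 * x1)) :
    ∀ n : ℕ, x1 * x2 ^ n = ((-1 : ℤ) ^ n) • (x2 ^ n * x1) := by
  intro n
  induction n with
  | zero => simp
  | succ n ih =>
    rw [pow_succ, ← mul_assoc, ih, smul_mul_assoc, mul_assoc, hcomm, pow_succ]
    simp [mul_smul, mul_assoc, pow_succ]

lemma swapk (x1 x2 : A) (hcomm : x1 * x2 = -(x2 * x1)) :
    ∀ (k n : ℕ), x1 ^ k * x2 ^ n = ((-1 : ℤ) ^ (k * n)) • (x2 ^ n * x1 ^ k) := by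
  intro k n
  induction k with
  | zero => simp
  | succ k ih =>
    rw [pow_succ, mul_assoc, swap1 x1 x2 hcomm, mul_smul_comm, ← mul_assoc, ih,
      smul_mul_assoc, smul_smul, ← pow_add]
    rw [show x2 ^ n * x1 ^ k * x1 = x2 ^ n * x1 ^ (k+1) by rw [pow_succ, mul_assoc]]
    ring_nf
    rw [add_comm 1 k, pow_succ]

lemma hmul (x1 x2 : A) (hcomm : x1 * x2 = -(x2 * x1)) : ∀ (i j k l : ℕ),
    (x2 ^ i * x1 ^ j) * (x2 ^ k * x1 ^ l)
      = ((-1 : ℤ) ^ (j * k)) • (x2 ^ (i + k) * x1 ^ (j + l)) := by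
  intro i j k l
  rw [mul_assoc, ← mul_assoc (x1 ^ j), swapk x1 x2 hcomm, smul_mul_assoc, mul_smul_comm,
    mul_assoc (x2 ^ k) (x1 ^ j) (x1 ^ l), ← pow_add, ← mul_assoc, ← pow_add]

lemma hbr (x1 x2 : A) (hcomm : x1 * x2 = -(x2 * x1)) : ∀ (i j k l : ℕ),
    ⁅x2 ^ i * x1 ^ j, x2 ^ k * x1 ^ l⁆
      = (((-1 : ℤ) ^ (j * k) - (-1 : ℤ) ^ (l * i))) • (x2 ^ (i + k) * x1 ^ (j + l)) := by
  intro i j k l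
  rw [Ring.lie_def, hmul x1 x2 hcomm, hmul x1 x2 hcomm, sub_smul, Nat.add_comm k i,
    Nat.add_comm l j]

end

set_option maxHeartbeats 2000000 in
theorem stmt18 {F A : Type*} [Field F] [CharZero F] [Ring A] [Algebra F A]
    (x1 x2 : A)
    (hcomm : x1 * x2 = -(x2 * x1)) (h3 : x1 ^ 3 = 0) (h5 : x2 ^ 5 = 0)
    (B : Module.Basis (Fin 5 × Fin 3) F A)
    (hB : ∀ p : Fin 5 × Fin 3, B p = x2 ^ (p.1 : ℕ) * x1 ^ (p.2 : ℕ)) :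
    (LieSubalgebra.lieSpan F A {x1, x2}).toSubmodule =
      Submodule.span F
        ({x1, x2, x2 * x1, x2 * x1 ^ 2, x2 ^ 2 * x1, x2 ^ 3 * x1,
          x2 ^ 3 * x1 ^ 2, x2 ^ 4 * x1} : Set A) ∧
    Module.finrank F ↥(LieSubalgebra.lieSpan F A {x1, x2}) = 8 := by
  have hz5 : ∀ i j : ℕ, 5 ≤ i → x2 ^ i * x1 ^ j = 0 := by
    intro i j hi
    obtain ⟨r, rfl⟩ := Nat.exists_eq_add_of_le hi
    rw [pow_add, h5, zero_mul, zero_mul]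
  have hz3 : ∀ i j : ℕ, 3 ≤ j → x2 ^ i * x1 ^ j = 0 := by
    intro i j hj
    obtain ⟨r, rfl⟩ := Nat.exists_eq_add_of_le hj
    rw [pow_add, h3, zero_mul, mul_zero]
  have hz5' : ∀ i : ℕ, 5 ≤ i → x2 ^ i * x1 = 0 := fun i hi => by
    simpa using hz5 i 1 hi
  have hz3' : ∀ j : ℕ, 3 ≤ j → x2 * x1 ^ j = 0 := fun j hj => by
    simpa using hz3 1 j hj
  set G : Set A := {x1, x2, x2 * x1, x2 * x1 ^ 2, x2 ^ 2 * x1, x2 ^ 3 * x1,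
      x2 ^ 3 * x1 ^ 2, x2 ^ 4 * x1} with hGdef
  set S : Submodule F A := Submodule.span F G with hSdef
  set L := LieSubalgebra.lieSpan F A {x1, x2} with hLdef
  have hGim : G = (fun p : ℕ × ℕ => x2 ^ p.1 * x1 ^ p.2) ''
      {(0,1),(1,0),(1,1),(1,2),(2,1),(3,1),(3,2),(4,1)} := by
    simp only [hGdef, Set.image_insert_eq, Set.image_singleton]
    norm_num
  have hmem : ∀ i j : ℕ,
      ((i,j) : ℕ × ℕ) ∈ ({(0,1),(1,0),(1,1),(1,2),(2,1),(3,1),(3,2),(4,1)} : Set (ℕ × ℕ)) →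
      x2 ^ i * x1 ^ j ∈ S := by
    intro i j hij
    apply Submodule.subset_span
    rw [hGim]
    exact ⟨(i,j), hij, rfl⟩
  -- closure of S under bracket
  have hgenbr : ∀ u ∈ G, ∀ v ∈ G, ⁅u, v⁆ ∈ S := by
    rw [hGim]
    rintro u ⟨⟨i,j⟩, hij, rfl⟩ v ⟨⟨k,l⟩, hkl, rfl⟩
    simp only [Set.mem_insert_iff, Set.mem_singleton_iff, Prod.mk.injEq] at hij hkl
    rw [hbr x1 x2 hcomm]
    rcases hij with ⟨rfl,rfl⟩|⟨rfl,rfl⟩|⟨rfl,rfl⟩|⟨rfl,rfl⟩|⟨rfl,rfl⟩|⟨rfl,rfl⟩|⟨rfl,rfl⟩|⟨rfl,rfl⟩ <;>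
    rcases hkl with ⟨rfl,rfl⟩|⟨rfl,rfl⟩|⟨rfl,rfl⟩|⟨rfl,rfl⟩|⟨rfl,rfl⟩|⟨rfl,rfl⟩|⟨rfl,rfl⟩|⟨rfl,rfl⟩ <;>
    first
      | ((convert S.zero_mem using 2 <;> norm_num [hz5, hz3, hz5', hz3']); done)
      | ((convert S.zero_mem using 1 <;> norm_num [hz5, hz3, hz5', hz3']); done)
      | (refine zsmul_mem (hmem _ _ ?_) _; norm_num; done)
  have hclosed : ∀ a ∈ S, ∀ b ∈ S, ⁅a, b⁆ ∈ S := by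
    intro a ha b hb
    induction hb using Submodule.span_induction with
    | mem g hg =>
      induction ha using Submodule.span_induction with
      | mem u hu => exact hgenbr u hu g hg
      | zero => simpa using S.zero_mem
      | add x y hx hy px py => rw [add_lie]; exact S.add_mem px py
      | smul c x hx px => rw [smul_lie]; exact S.smul_mem c px
    | zero => simpa using S.zero_mem
    | add x y hx hy px py => rw [lie_add]; exact S.add_mem px py
    | smul c x hx px => rw [lie_smul]; exact S.smul_mem c px
  let K : LieSubalgebra F A :=
    { S with lie_mem' := fun {x y} hx hy => hclosed x hx y hy }
  have hle1 : L.toSubmodule ≤ S := by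
    have h : L ≤ K := LieSubalgebra.lieSpan_le.mpr (by
      intro z hz
      rcases hz with rfl | hz
      · exact Submodule.subset_span (by rw [hGdef]; left; rfl)
      · rcases hz with rfl
        exact Submodule.subset_span (by rw [hGdef]; right; left; rfl))
    exact fun x hx => h hx
  -- reverse inclusion
  have hx1L : x1 ∈ L := LieSubalgebra.subset_lieSpan (by left; rfl)
  have hx2L : x2 ∈ L := LieSubalgebra.subset_lieSpan (by right; rfl)
  have hdiv : ∀ (c : ℤ) (v : A), c ≠ 0 → c • v ∈ L → v ∈ L := by
    intro c v hc hv
    have h1 : ((c : F)) • v ∈ L := by rwa [Int.cast_smul_eq_zsmul]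
    have h2 := L.smul_mem ((c : F))⁻¹ h1
    rwa [smul_smul, inv_mul_cancel₀ (by exact_mod_cast hc), one_smul] at h2
  have step : ∀ i j k l : ℕ, ((-1:ℤ) ^ (j*k) - (-1:ℤ) ^ (l*i)) ≠ 0 →
      x2 ^ i * x1 ^ j ∈ L → x2 ^ k * x1 ^ l ∈ L → x2 ^ (i+k) * x1 ^ (j+l) ∈ L := by
    intro i j k l hc hu hv
    have hb : ⁅x2 ^ i * x1 ^ j, x2 ^ k * x1 ^ l⁆ ∈ L := L.lie_mem hu hv
    rw [hbr x1 x2 hcomm] at hb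
    exact hdiv _ _ hc hb
  have hx1L' : x2 ^ 0 * x1 ^ 1 ∈ L := by simpa using hx1L
  have hx2L' : x2 ^ 1 * x1 ^ 0 ∈ L := by simpa using hx2L
  have m11 : x2 ^ 1 * x1 ^ 1 ∈ L := by simpa using step 0 1 1 0 (by norm_num) hx1L' hx2L'
  have m12 : x2 ^ 1 * x1 ^ 2 ∈ L := by simpa using step 1 1 0 1 (by norm_num) m11 hx1L'
  have m21 : x2 ^ 2 * x1 ^ 1 ∈ L := by simpa using step 1 1 1 0 (by norm_num) m11 hx2L'
  have m31 : x2 ^ 3 * x1 ^ 1 ∈ L := by simpa using step 2 1 1 0 (by norm_num) m21 hx2L'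
  have m32 : x2 ^ 3 * x1 ^ 2 ∈ L := by simpa using step 3 1 0 1 (by norm_num) m31 hx1L'
  have m41 : x2 ^ 4 * x1 ^ 1 ∈ L := by simpa using step 3 1 1 0 (by norm_num) m31 hx2L'
  have hle2 : S ≤ L.toSubmodule := by
    rw [hSdef]
    apply Submodule.span_le.mpr
    intro z hz
    rw [hGdef] at hz
    simp only [Set.mem_insert_iff, Set.mem_singleton_iff] at hz
    rcases hz with rfl|rfl|rfl|rfl|rfl|rfl|rfl|rfl
    · exact hx1L
    · exact hx2L
    · simpa using m11
    · simpa using m12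
    · simpa using m21
    · simpa using m31
    · simpa using m32
    · simpa using m41
  have part1 : L.toSubmodule = S := le_antisymm hle1 hle2
  refine ⟨part1, ?_⟩
  -- finrank
  have hrk : Module.finrank F ↥L = Module.finrank F ↥(L.toSubmodule) := rfl
  rw [hrk, part1, hSdef]
  let f : Fin 8 → Fin 5 × Fin 3 := ![(0,1),(1,0),(1,1),(1,2),(2,1),(3,1),(3,2),(4,1)]
  have hfinj : Function.Injective f := by decide
  have hli : LinearIndependent F (B ∘ f) := B.linearIndependent.comp f hfinj
  have hrange : Set.range (B ∘ f) = G := by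
    rw [Set.range_comp]
    rw [show Set.range f = ({(0,1),(1,0),(1,1),(1,2),(2,1),(3,1),(3,2),(4,1)}
        : Set (Fin 5 × Fin 3)) by
      simp only [f, Matrix.range_cons, Matrix.range_empty]
      ext x
      simp only [Set.mem_insert_iff, Set.mem_singleton_iff, Set.mem_union, Set.mem_empty_iff_false]
      tauto]
    rw [hGdef]
    simp [Set.image_insert_eq, hB, show ((3:Fin 5):ℕ) = 3 from rfl,
      show ((4:Fin 5):ℕ) = 4 from rfl, show ((2:Fin 5):ℕ) = 2 from rfl,
      show ((2:Fin 3):ℕ) = 2 from rfl]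
  rw [← hrange, finrank_span_eq_card hli]
  simp
end
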